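/- The function F⁽²⁾(x₁,y₁,x₂,y₂) = ((x₁-x₂)² + (y₁+y₂)²)/(y₁y₂) on the product of two copies of the upper half-plane is annihilated by the diagonal prolongations of the vector fields X₁ = ∂/∂x, X₂ = x∂/∂x + y∂/∂y, X₃ = (x²-y²)∂/∂x + 2xy∂/∂y; that is, (X_i(x₁,y₁) + X_i(x₂,y₂))F⁽²⁾ = 0 for i = 1,2,3. -/

import Mathlib

private lemma hdx (a b c x : ℝ) :
    HasDerivAt (fun t : ℝ => ((t - a) ^ 2 + b ^ 2) / c) (2 * (x - a) / c) x := by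
  have h := ((((hasDerivAt_id x).sub_const a).fun_pow 2).add_const (b ^ 2)).div_const c
  refine h.congr_deriv ?_; simp only [id_eq]; ring

private lemma hdx' (a b c x : ℝ) :
    HasDerivAt (fun t : ℝ => ((a - t) ^ 2 + b ^ 2) / c) (-(2 * (a - x)) / c) x := by
  have h := ((((hasDerivAt_id x).const_sub a).fun_pow 2).add_const (b ^ 2)).div_const c
  refine h.congr_deriv ?_; simp only [id_eq]; ring

private lemma hdy (A d x : ℝ) (hx : x ≠ 0) (hd : d ≠ 0) :
    HasDerivAt (fun t : ℝ => (A + (t + d) ^ 2) / (t * d))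
      ((2 * (x + d) * (x * d) - (A + (x + d) ^ 2) * d) / (x * d) ^ 2) x := by
  have hnum : HasDerivAt (fun t : ℝ => A + (t + d) ^ 2) (2 * (x + d)) x := by
    have h := (((hasDerivAt_id x).add_const d).fun_pow 2).const_add A
    refine h.congr_deriv ?_; simp only [id_eq]; ring
  have hden : HasDerivAt (fun t : ℝ => t * d) d x := by
    simpa using (hasDerivAt_id x).mul_const d
  exact hnum.div hden (mul_ne_zero hx hd)

private lemma hdy' (A d x : ℝ) (hd : d ≠ 0) (hx : x ≠ 0) :
    HasDerivAt (fun t : ℝ => (A + (d + t) ^ 2) / (d * t))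
      ((2 * (d + x) * (d * x) - (A + (d + x) ^ 2) * d) / (d * x) ^ 2) x := by
  have hnum : HasDerivAt (fun t : ℝ => A + (d + t) ^ 2) (2 * (d + x)) x := by
    have h := (((hasDerivAt_id x).const_add d).fun_pow 2).const_add A
    refine h.congr_deriv ?_; simp only [id_eq]; ring
  have hden : HasDerivAt (fun t : ℝ => d * t) d x := by
    simpa using (hasDerivAt_id x).const_mul d
  exact hnum.div hden (mul_ne_zero hd hx)

/-- Action of the diagonal prolongation of a vector field `X = a∂ₓ + b∂_y` on `ℝ²`
(encoded as `X : ℝ × ℝ → ℝ × ℝ`) on a function `F(x₁,y₁,x₂,y₂)` on `(ℝ²)²`. -/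
noncomputable def prolong (X : ℝ × ℝ → ℝ × ℝ) (F : ℝ → ℝ → ℝ → ℝ → ℝ)
    (x₁ y₁ x₂ y₂ : ℝ) : ℝ :=
  (X (x₁, y₁)).1 * deriv (fun t => F t y₁ x₂ y₂) x₁
    + (X (x₁, y₁)).2 * deriv (fun t => F x₁ t x₂ y₂) y₁
    + (X (x₂, y₂)).1 * deriv (fun t => F x₁ y₁ t y₂) x₂
    + (X (x₂, y₂)).2 * deriv (fun t => F x₁ y₁ x₂ t) y₂

/-- The constant of motion `F⁽²⁾ = ((x₁-x₂)² + (y₁+y₂)²)/(y₁y₂)` of class P₂ is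
annihilated by the diagonal prolongations of `X₁ = ∂ₓ`, `X₂ = x∂ₓ + y∂_y`,
`X₃ = (x²-y²)∂ₓ + 2xy∂_y`. -/
theorem sl2_classP2_constant_of_motion :
    ∀ x₁ y₁ x₂ y₂ : ℝ, 0 < y₁ → 0 < y₂ →
      prolong (fun _ => (1, 0))
        (fun a b c d => ((a - c) ^ 2 + (b + d) ^ 2) / (b * d)) x₁ y₁ x₂ y₂ = 0 ∧
      prolong (fun q => (q.1, q.2))
        (fun a b c d => ((a - c) ^ 2 + (b + d) ^ 2) / (b * d)) x₁ y₁ x₂ y₂ = 0 ∧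
      prolong (fun q => (q.1 ^ 2 - q.2 ^ 2, 2 * q.1 * q.2))
        (fun a b c d => ((a - c) ^ 2 + (b + d) ^ 2) / (b * d)) x₁ y₁ x₂ y₂ = 0 := by
  intro x₁ y₁ x₂ y₂ hy₁ hy₂
  have hy₁' := hy₁.ne'
  have hy₂' := hy₂.ne'
  have h1 : deriv (fun t => ((t - x₂) ^ 2 + (y₁ + y₂) ^ 2) / (y₁ * y₂)) x₁
      = 2 * (x₁ - x₂) / (y₁ * y₂) := (hdx x₂ (y₁ + y₂) (y₁ * y₂) x₁).deriv
  have h2 : deriv (fun t => ((x₁ - x₂) ^ 2 + (t + y₂) ^ 2) / (t * y₂)) y₁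
      = (2 * (y₁ + y₂) * (y₁ * y₂) - ((x₁ - x₂) ^ 2 + (y₁ + y₂) ^ 2) * y₂) / (y₁ * y₂) ^ 2 :=
    (hdy ((x₁ - x₂) ^ 2) y₂ y₁ hy₁' hy₂').deriv
  have h3 : deriv (fun t => ((x₁ - t) ^ 2 + (y₁ + y₂) ^ 2) / (y₁ * y₂)) x₂
      = -(2 * (x₁ - x₂)) / (y₁ * y₂) := (hdx' x₁ (y₁ + y₂) (y₁ * y₂) x₂).deriv
  have h4 : deriv (fun t => ((x₁ - x₂) ^ 2 + (y₁ + t) ^ 2) / (y₁ * t)) y₂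
      = (2 * (y₁ + y₂) * (y₁ * y₂) - ((x₁ - x₂) ^ 2 + (y₁ + y₂) ^ 2) * y₁) / (y₁ * y₂) ^ 2 :=
    (hdy' ((x₁ - x₂) ^ 2) y₁ y₂ hy₁' hy₂').deriv
  refine ⟨?_, ?_, ?_⟩ <;>
    · simp only [prolong, h1, h2, h3, h4]
      field_simp
      try ring
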